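/- Let Q = B_∞ = {x ∈ ℝⁿ : ‖x‖_∞ ≤ 1} and ψ(x) = ½‖x‖². Then for every ε ≥ 0, P(ERᶜ(ε)) ≤ ε·n + ½ε²·n. -/

import Mathlib

open MeasureTheory Set Metric Pointwise RealInnerProductSpace

noncomputable section

/-- Standard Gaussian measure of a set in `ℝⁿ`. -/
def gauss {n : ℕ} (B : Set (EuclideanSpace ℝ (Fin n))) : ℝ :=
  ∫ x in B, (2 * Real.pi) ^ (-(n : ℝ) / 2) * Real.exp (-‖x‖ ^ 2 / 2)

/-- Solution set of `P₀(g)`: minimize `-g·x` over `Q`. -/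
def sol0 {n : ℕ} (Q : Set (EuclideanSpace ℝ (Fin n))) (g : EuclideanSpace ℝ (Fin n)) :
    Set (EuclideanSpace ℝ (Fin n)) :=
  {x ∈ Q | ∀ y ∈ Q, -⟪g, x⟫ ≤ -⟪g, y⟫}

/-- Solution set of `P_ε(g)`: minimize `-g·x + εψ(x)` over `Q` (here `dom ψ = ℝⁿ`). -/
def solReg {n : ℕ} (Q : Set (EuclideanSpace ℝ (Fin n))) (ψ : EuclideanSpace ℝ (Fin n) → ℝ)
    (ε : ℝ) (g : EuclideanSpace ℝ (Fin n)) : Set (EuclideanSpace ℝ (Fin n)) :=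
  {x ∈ Q | ∀ y ∈ Q, -⟪g, x⟫ + ε * ψ x ≤ -⟪g, y⟫ + ε * ψ y}

/-- The exact regularization event: `P₀(g)` has a unique solution which also solves `P_ε(g)`. -/
def ER {n : ℕ} (Q : Set (EuclideanSpace ℝ (Fin n))) (ψ : EuclideanSpace ℝ (Fin n) → ℝ)
    (ε : ℝ) : Set (EuclideanSpace ℝ (Fin n)) :=
  {g | ∃ z, sol0 Q g = {z} ∧ z ∈ solReg Q ψ ε g}

/-- The unit `ℓ∞` ball in `ℝⁿ`. -/
def Binf (n : ℕ) : Set (EuclideanSpace ℝ (Fin n)) := {x | ∀ i, |x i| ≤ 1}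

namespace Stmt17Aux

lemma inner_eq {n : ℕ} (g x : EuclideanSpace ℝ (Fin n)) : ⟪g, x⟫ = ∑ i, g i * x i := by
  simp [PiLp.inner_apply, RCLike.inner_apply, mul_comm]

lemma norm_sq_eq {n : ℕ} (x : EuclideanSpace ℝ (Fin n)) : ‖x‖ ^ 2 = ∑ i, x i ^ 2 := by
  rw [EuclideanSpace.norm_eq, Real.sq_sqrt (by positivity)]; simp [sq_abs]

lemma mem_ER {n : ℕ} {ε : ℝ} (hε : 0 ≤ ε) (g : EuclideanSpace ℝ (Fin n))
    (hg : ∀ i, ε < |g i|) : g ∈ ER (Binf n) (fun x => ‖x‖ ^ 2 / 2) ε := by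
  classical
  set z : EuclideanSpace ℝ (Fin n) := WithLp.toLp 2 (fun i => if 0 < g i then (1 : ℝ) else -1) with hz
  have hzabs : ∀ i, |z i| = 1 := by
    intro i; by_cases h : 0 < g i <;> simp [hz, h]
  have hgz : ∀ i, g i * z i = |g i| := by
    intro i
    have hne : g i ≠ 0 := by
      intro h; have := hg i; rw [h] at this; simp at this; linarith
    by_cases h : 0 < g i
    · simp [hz, h, abs_of_pos h]
    · have hlt : g i < 0 := lt_of_le_of_ne (not_lt.1 h) hne
      simp [hz, h, abs_of_neg hlt]
  have hzQ : z ∈ Binf n := fun i => le_of_eq (hzabs i)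
  have hle : ∀ y ∈ Binf n, ∀ i, g i * y i ≤ |g i| := by
    intro y hy i
    calc g i * y i ≤ |g i * y i| := le_abs_self _
    _ = |g i| * |y i| := abs_mul _ _
    _ ≤ |g i| * 1 := by have := hy i; nlinarith [abs_nonneg (g i)]
    _ = |g i| := mul_one _
  have hz0 : z ∈ sol0 (Binf n) g := by
    refine ⟨hzQ, fun y hy => ?_⟩
    simp only [neg_le_neg_iff, inner_eq]
    apply Finset.sum_le_sum
    intro i _
    rw [hgz i]; exact hle y hy i
  refine ⟨z, ?_, ?_⟩
  · apply Set.eq_singleton_iff_unique_mem.mpr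
    refine ⟨hz0, fun x hx => ?_⟩
    have h1 : ⟪g, z⟫ ≤ ⟪g, x⟫ := by
      have := hx.2 z hzQ; linarith
    have h2 : ⟪g, x⟫ ≤ ⟪g, z⟫ := by have := hz0.2 x hx.1; linarith
    have h3 : ∑ i, g i * z i = ∑ i, |g i| :=
      Finset.sum_congr rfl fun i _ => hgz i
    have heq : ∑ i, g i * x i = ∑ i, |g i| := by
      simp only [inner_eq] at h1 h2; linarith
    have hterm : ∀ i ∈ Finset.univ, g i * x i = |g i| :=
      (Finset.sum_eq_sum_iff_of_le (fun i _ => hle x hx.1 i)).1 heq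
    ext i
    have hne : g i ≠ 0 := by
      intro h; have := hg i; rw [h] at this; simp at this; linarith
    have h4 := hterm i (Finset.mem_univ i)
    exact mul_left_cancel₀ hne (h4.trans (hgz i).symm)
  · refine ⟨hzQ, fun y hy => ?_⟩
    simp only [inner_eq, norm_sq_eq]
    have : ∀ i ∈ Finset.univ, g i * y i - ε * (y i ^ 2) / 2 ≤ g i * z i - ε * (z i ^ 2) / 2 := by
      intro i _
      rw [hgz i]
      have hy1 : |y i| ≤ 1 := hy i
      have h1 : g i * y i ≤ |g i| * |y i| := by
        calc g i * y i ≤ |g i * y i| := le_abs_self _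
        _ = |g i| * |y i| := abs_mul _ _
      have h2 : z i ^ 2 = 1 := by
        have := hzabs i; nlinarith [sq_abs (z i)]
      rw [h2]
      have h3 : ε < |g i| := hg i
      have h4 : y i ^ 2 = |y i| ^ 2 := (sq_abs _).symm
      have h5 : 0 ≤ (1 - |y i|) * (|g i| - ε / 2 * (1 + |y i|)) := by
        apply mul_nonneg (by linarith)
        nlinarith [abs_nonneg (y i)]
      nlinarith [abs_nonneg (y i)]
    have hsum := Finset.sum_le_sum this
    rw [Finset.sum_sub_distrib, Finset.sum_sub_distrib] at hsum
    have e1 : ε * ((∑ i, y i ^ 2) / 2) = ∑ i, ε * y i ^ 2 / 2 := by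
      rw [← mul_div_assoc, Finset.mul_sum, Finset.sum_div]
    have e2 : ε * ((∑ i, z i ^ 2) / 2) = ∑ i, ε * z i ^ 2 / 2 := by
      rw [← mul_div_assoc, Finset.mul_sum, Finset.sum_div]
    linarith

/-- One-dimensional standard Gaussian density. -/
def φ (t : ℝ) : ℝ := (2 * Real.pi) ^ (-(1 : ℝ) / 2) * Real.exp (-t ^ 2 / 2)

lemma two_pi_pos : (0 : ℝ) < 2 * Real.pi := by positivity

lemma phi_nonneg (t : ℝ) : 0 ≤ φ t := by
  unfold φ; positivity

lemma phi_integrable : Integrable φ := by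
  have h : Integrable (fun t : ℝ => Real.exp (-(1 / 2 : ℝ) * t ^ 2)) :=
    integrable_exp_neg_mul_sq (by norm_num)
  have he : ∀ t : ℝ, Real.exp (-t ^ 2 / 2) = Real.exp (-(1 / 2 : ℝ) * t ^ 2) := by
    intro t; ring_nf
  unfold φ
  simp only [he]
  exact h.const_mul _

lemma integral_phi : ∫ t, φ t = 1 := by
  unfold φ
  rw [MeasureTheory.integral_const_mul]
  have he : ∀ t : ℝ, Real.exp (-t ^ 2 / 2) = Real.exp (-(1 / 2 : ℝ) * t ^ 2) := by
    intro t; ring_nf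
  simp only [he]
  rw [integral_gaussian]
  have h1 : Real.pi / (1 / 2) = 2 * Real.pi := by ring
  rw [h1, Real.sqrt_eq_rpow, ← Real.rpow_add two_pi_pos]
  norm_num

lemma f_eq_prod {n : ℕ} (x : EuclideanSpace ℝ (Fin n)) :
    (2 * Real.pi) ^ (-(n : ℝ) / 2) * Real.exp (-‖x‖ ^ 2 / 2) = ∏ j, φ (x j) := by
  have h1 : Real.exp (-‖x‖ ^ 2 / 2) = ∏ j, Real.exp (-x j ^ 2 / 2) := by
    rw [norm_sq_eq, ← Real.exp_sum]
    congr 1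
    rw [neg_div, Finset.sum_div, ← Finset.sum_neg_distrib]
    simp [neg_div]
  have h2 : (2 * Real.pi : ℝ) ^ (-(n : ℝ) / 2) = ∏ _j : Fin n, (2 * Real.pi : ℝ) ^ (-(1 : ℝ) / 2) := by
    rw [Finset.prod_const, Finset.card_univ, Fintype.card_fin,
      ← Real.rpow_natCast ((2 * Real.pi : ℝ) ^ (-(1 : ℝ) / 2)) n, ← Real.rpow_mul two_pi_pos.le]
    congr 1; ring
  rw [h1, h2, ← Finset.prod_mul_distrib]
  rfl

lemma slab_measurable {n : ℕ} (ε : ℝ) (i : Fin n) :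
    MeasurableSet {g : EuclideanSpace ℝ (Fin n) | |g i| ≤ ε} := by
  have h : {g : EuclideanSpace ℝ (Fin n) | |g i| ≤ ε}
      = (fun g : EuclideanSpace ℝ (Fin n) => g i) ⁻¹' (Icc (-ε) ε) := by
    ext g; simp [abs_le]
  rw [h]
  exact ((measurable_pi_apply i).comp
    ((MeasurableEquiv.toLp 2 (Fin n → ℝ)).symm).measurable) measurableSet_Icc

lemma slab_integral {n : ℕ} {ε : ℝ} (hε : 0 ≤ ε) (i : Fin n) :
    ∫ x in {g : EuclideanSpace ℝ (Fin n) | |g i| ≤ ε},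
      (2 * Real.pi) ^ (-(n : ℝ) / 2) * Real.exp (-‖x‖ ^ 2 / 2) ≤ ε := by
  classical
  set e := (MeasurableEquiv.toLp 2 (Fin n → ℝ)).symm with he
  set S := {g : EuclideanSpace ℝ (Fin n) | |g i| ≤ ε} with hS
  set f : EuclideanSpace ℝ (Fin n) → ℝ :=
    fun x => (2 * Real.pi) ^ (-(n : ℝ) / 2) * Real.exp (-‖x‖ ^ 2 / 2) with hf
  set ψ : Fin n → ℝ → ℝ := fun j => if j = i then (Icc (-ε) ε).indicator φ else φ with hψ
  have key : ∀ y : Fin n → ℝ, S.indicator f (e.symm y) = ∏ j, ψ j (y j) := by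
    intro y
    by_cases h : |y i| ≤ ε
    · have hmem : e.symm y ∈ S := h
      calc S.indicator f (e.symm y) = f (e.symm y) := Set.indicator_of_mem hmem f
        _ = ∏ j, φ ((e.symm y) j) := f_eq_prod _
        _ = ∏ j, ψ j (y j) := by
          apply Finset.prod_congr rfl
          intro j _
          by_cases hj : j = i
          · subst hj
            have hmem2 : y j ∈ Icc (-ε) ε := by rw [Set.mem_Icc, ← abs_le]; exact h
            simp only [hψ, if_pos rfl]
            rw [Set.indicator_of_mem hmem2]
            rfl
          · simp only [hψ, if_neg hj]
            rfl
    · have hnm : e.symm y ∉ S := h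
      rw [Set.indicator_of_notMem hnm]
      symm
      apply Finset.prod_eq_zero (Finset.mem_univ i)
      have : y i ∉ Icc (-ε) ε := by rw [Set.mem_Icc, ← abs_le]; exact h
      simp [hψ, Set.indicator_of_notMem this]
  have hIcc : ∫ t in Icc (-ε) ε, φ t ≤ ε := by
    have hb : ∀ t ∈ Icc (-ε) ε, φ t ≤ (2 * Real.pi) ^ (-(1 : ℝ) / 2) := by
      intro t _
      unfold φ
      have h1 : Real.exp (-t ^ 2 / 2) ≤ 1 := by
        rw [Real.exp_le_one_iff]
        nlinarith [sq_nonneg t]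
      nlinarith [Real.rpow_nonneg two_pi_pos.le (-(1 : ℝ) / 2)]
    have hmono : ∫ t in Icc (-ε) ε, φ t ≤ ∫ _t in Icc (-ε) ε, (2 * Real.pi) ^ (-(1 : ℝ) / 2) := by
      apply setIntegral_mono_on phi_integrable.integrableOn
        (integrableOn_const (by rw [Real.volume_Icc]; exact ENNReal.ofReal_ne_top))
        measurableSet_Icc hb
    have hconst : ∫ _t in Icc (-ε) ε, (2 * Real.pi) ^ (-(1 : ℝ) / 2)
        = (2 * Real.pi) ^ (-(1 : ℝ) / 2) * (2 * ε) := by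
      rw [setIntegral_const, measureReal_def, Real.volume_Icc, smul_eq_mul]
      rw [ENNReal.toReal_ofReal (by linarith)]
      ring
    have hc : (2 * Real.pi : ℝ) ^ (-(1 : ℝ) / 2) = (Real.sqrt (2 * Real.pi))⁻¹ := by
      rw [neg_div, Real.rpow_neg two_pi_pos.le, Real.sqrt_eq_rpow]
    have hs : 2 ≤ Real.sqrt (2 * Real.pi) := by
      have h4 : (4 : ℝ) ≤ 2 * Real.pi := by nlinarith [Real.pi_gt_three]
      nlinarith [Real.sq_sqrt two_pi_pos.le, Real.sqrt_nonneg (2 * Real.pi)]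
    have hfinal : (2 * Real.pi : ℝ) ^ (-(1 : ℝ) / 2) * (2 * ε) ≤ ε := by
      rw [hc, inv_mul_le_iff₀ (by linarith)]
      nlinarith
    linarith
  calc ∫ x in S, f x = ∫ x, S.indicator f x := (integral_indicator (slab_measurable ε i)).symm
    _ = ∫ y : Fin n → ℝ, S.indicator f (e.symm y) :=
        (((EuclideanSpace.volume_preserving_symm_measurableEquiv_toLp (Fin n)).symm).integral_comp'
          (S.indicator f)).symm
    _ = ∫ y : Fin n → ℝ, ∏ j, ψ j (y j) := by simp_rw [key]
    _ = ∏ j, ∫ t, ψ j t := MeasureTheory.integral_fintype_prod_eq_prod ψ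
    _ = ∫ t in Icc (-ε) ε, φ t := by
        have hval : ∀ j, ∫ t, ψ j t = if j = i then ∫ t in Icc (-ε) ε, φ t else 1 := by
          intro j
          by_cases hj : j = i
          · simp only [hψ, hj, if_true]
            rw [integral_indicator measurableSet_Icc]
          · simp only [hψ, hj, if_false]
            exact integral_phi
        rw [Finset.prod_congr rfl (fun j _ => hval j)]
        rw [Finset.prod_ite_eq' Finset.univ i (fun _ => ∫ t in Icc (-ε) ε, φ t)]
        simp
    _ ≤ ε := hIcc

end Stmt17Aux

open Stmt17Aux

/-- Upper bound on the failure probability of exact regularization for the `ℓ∞` ball with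
quadratic regularization. -/
theorem stmt17 {n : ℕ} (ε : ℝ) (hε : 0 ≤ ε) :
    gauss (ER (Binf n) (fun x => ‖x‖ ^ 2 / 2) ε)ᶜ ≤ ε * n + ε ^ 2 * n / 2 := by
  classical
  set f : EuclideanSpace ℝ (Fin n) → ℝ :=
    fun x => (2 * Real.pi) ^ (-(n : ℝ) / 2) * Real.exp (-‖x‖ ^ 2 / 2) with hf
  have hgauss : ∀ B : Set (EuclideanSpace ℝ (Fin n)), gauss B = ∫ x in B, f x := fun _ => rfl
  have hf0 : ∀ x, 0 ≤ f x := fun x => by rw [hf]; positivity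
  have hfint : Integrable f := by
    have h1 : Integrable (fun y : Fin n → ℝ => ∏ j, φ (y j)) :=
      Integrable.fintype_prod (fun _ => phi_integrable)
    have h2 : Integrable ((fun y : Fin n → ℝ => ∏ j, φ (y j))
        ∘ ((MeasurableEquiv.toLp 2 (Fin n → ℝ)).symm)) :=
      ((EuclideanSpace.volume_preserving_symm_measurableEquiv_toLp (Fin n)).integrable_comp_emb
        (MeasurableEquiv.measurableEmbedding _)).2 h1
    have heq : f = (fun y : Fin n → ℝ => ∏ j, φ (y j))
        ∘ ((MeasurableEquiv.toLp 2 (Fin n → ℝ)).symm) := by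
      funext x; exact f_eq_prod x
    rwa [heq]
  set slab : Fin n → Set (EuclideanSpace ℝ (Fin n)) :=
    fun i => {g : EuclideanSpace ℝ (Fin n) | |g i| ≤ ε} with hslab
  have hslabm : ∀ i, MeasurableSet (slab i) := fun i => slab_measurable ε i
  have hU : MeasurableSet (⋃ i, slab i) := MeasurableSet.iUnion hslabm
  have hsub : (ER (Binf n) (fun x => ‖x‖ ^ 2 / 2) ε)ᶜ ⊆ ⋃ i, slab i := by
    intro g hg
    by_contra hx
    apply hg
    simp only [mem_iUnion, not_exists] at hx
    exact mem_ER hε g (fun i => lt_of_not_ge (hx i))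
  have step1 : gauss (ER (Binf n) (fun x => ‖x‖ ^ 2 / 2) ε)ᶜ ≤ ∫ x in ⋃ i, slab i, f x := by
    rw [hgauss]
    exact setIntegral_mono_set hfint.integrableOn (ae_of_all _ hf0)
      (HasSubset.Subset.eventuallyLE hsub)
  have step2 : ∫ x in ⋃ i, slab i, f x ≤ ∑ i, ∫ x in slab i, f x := by
    rw [← integral_indicator hU]
    have hpt : ∀ x, (⋃ i, slab i).indicator f x ≤ ∑ i, (slab i).indicator f x := by
      intro x
      by_cases hx : x ∈ ⋃ i, slab i
      · rw [Set.indicator_of_mem hx]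
        obtain ⟨i, hi⟩ := mem_iUnion.1 hx
        calc f x = (slab i).indicator f x := (Set.indicator_of_mem hi f).symm
          _ ≤ ∑ j, (slab j).indicator f x :=
            Finset.single_le_sum (fun j _ => Set.indicator_nonneg (fun y _ => hf0 y) x)
              (Finset.mem_univ i)
      · rw [Set.indicator_of_notMem hx]
        exact Finset.sum_nonneg fun j _ => Set.indicator_nonneg (fun y _ => hf0 y) x
    calc ∫ x, (⋃ i, slab i).indicator f x ≤ ∫ x, ∑ i, (slab i).indicator f x :=
        integral_mono (hfint.indicator hU)
          (integrable_finset_sum _ fun i _ => hfint.indicator (hslabm i)) hpt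
      _ = ∑ i, ∫ x, (slab i).indicator f x :=
        integral_finset_sum _ fun i _ => hfint.indicator (hslabm i)
      _ = ∑ i, ∫ x in slab i, f x := by
        exact Finset.sum_congr rfl fun i _ => integral_indicator (hslabm i)
  have step3 : ∀ i, ∫ x in slab i, f x ≤ ε := fun i => slab_integral hε i
  have htot : gauss (ER (Binf n) (fun x => ‖x‖ ^ 2 / 2) ε)ᶜ ≤ (n : ℝ) * ε := by
    have := le_trans step1 (le_trans step2 (Finset.sum_le_sum fun i _ => step3 i))
    simpa [Finset.sum_const, Finset.card_univ, nsmul_eq_mul] using this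
  have hnn : (0 : ℝ) ≤ (n : ℝ) := Nat.cast_nonneg n
  nlinarith [htot, sq_nonneg ε, mul_nonneg (mul_nonneg hε hε) hnn]
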